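/- Let b, n, m ∈ ℕ with n > m. Let P × Q ≤ S_{bn} × S_m ≤ S_{bn+m}, where P contains an element σ which is a product of b disjoint n-cycles, and let g ∈ Q. Then for class functions χ of P and η of Q, one has (χ × η)↑^{S_{bn+m}}(σg) = χ↑^{S_{bn}}(σ) · η↑^{S_m}(g). -/

import Mathlib

open scoped Classical
open Equiv

noncomputable section

/-- The isomorphism `Perm α ≃* Perm β` induced by `e : α ≃ β`, as a monoid hom. -/
def permCongrHom {α β : Type*} (e : α ≃ β) : Perm α →* Perm β where
  toFun σ := e.permCongr σ
  map_one' := by ext x; simp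
  map_mul' := by intro σ τ; ext x; simp [Equiv.permCongr_apply, Equiv.Perm.mul_apply]

/-- Induction of a function along an (injective) homomorphism `f : H →* G`. -/
def indVia {H G : Type*} [Group H] [Fintype H] [Group G] [Fintype G]
    (f : H →* G) (φ : H → ℂ) (g : G) : ℂ :=
  (Nat.card H : ℂ)⁻¹ * ∑ x : G, ∑ h : H, if f h = x⁻¹ * g * x then φ h else 0

/-- The Young subgroup embedding `S_n × S_m → S_{n+m}`. -/
def youngEmb (n m : ℕ) : Perm (Fin n) × Perm (Fin m) →* Perm (Fin (n + m)) :=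
  (_root_.permCongrHom finSumFinEquiv).comp (Equiv.Perm.sumCongrHom (Fin n) (Fin m))

/- ================= Auxiliary lemmas ================= -/

lemma youngEmb_apply (n m : ℕ) (pq : Perm (Fin n) × Perm (Fin m)) (s : Fin n ⊕ Fin m) :
    youngEmb n m pq (finSumFinEquiv s) = finSumFinEquiv (Equiv.sumCongr pq.1 pq.2 s) := by
  simp [youngEmb, _root_.permCongrHom, Equiv.Perm.sumCongrHom, Equiv.permCongr_apply]

lemma youngEmb_injective (n m : ℕ) : Function.Injective (youngEmb n m) := by
  intro u v huv
  apply Equiv.Perm.sumCongrHom_injective (α := Fin n) (β := Fin m)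
  exact (Equiv.permCongr finSumFinEquiv).injective huv

lemma minimalPeriod_conj {α : Type*} (T x : Perm α) (a : α) :
    Function.minimalPeriod ⇑(x⁻¹ * T * x) a = Function.minimalPeriod ⇑T (x a) := by
  rw [Function.minimalPeriod_eq_minimalPeriod_iff]
  intro k
  show (x⁻¹ * T * x)^[k] a = a ↔ _^[k] (x a) = x a
  rw [Equiv.Perm.iterate_eq_pow, Equiv.Perm.iterate_eq_pow]
  have h1 : (x⁻¹ * T * x) ^ k = x⁻¹ * T ^ k * x := by
    induction k with
    | zero => simp
    | succ k ih => rw [pow_succ, ih, pow_succ]; group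
  rw [h1]
  constructor
  · intro h
    have := congrArg x h
    simpa [Equiv.Perm.mul_apply] using this
  · intro h
    simp [Equiv.Perm.mul_apply, h]

lemma minimalPeriod_young_inl (n m : ℕ) (p : Perm (Fin n)) (q : Perm (Fin m)) (i : Fin n) :
    Function.minimalPeriod ⇑(youngEmb n m (p, q)) (finSumFinEquiv (Sum.inl i)) =
      Function.minimalPeriod ⇑p i := by
  rw [Function.minimalPeriod_eq_minimalPeriod_iff]
  intro k
  show _^[k] _ = _ ↔ _^[k] _ = _
  rw [Equiv.Perm.iterate_eq_pow, Equiv.Perm.iterate_eq_pow, ← map_pow, Prod.pow_mk,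
    youngEmb_apply]
  constructor
  · intro h
    have := finSumFinEquiv.injective h
    simpa using this
  · intro h
    simp [h]

lemma minimalPeriod_young_inr (n m : ℕ) (p : Perm (Fin n)) (q : Perm (Fin m)) (j : Fin m) :
    Function.minimalPeriod ⇑(youngEmb n m (p, q)) (finSumFinEquiv (Sum.inr j)) =
      Function.minimalPeriod ⇑q j := by
  rw [Function.minimalPeriod_eq_minimalPeriod_iff]
  intro k
  show _^[k] _ = _ ↔ _^[k] _ = _
  rw [Equiv.Perm.iterate_eq_pow, Equiv.Perm.iterate_eq_pow, ← map_pow, Prod.pow_mk,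
    youngEmb_apply]
  constructor
  · intro h
    have := finSumFinEquiv.injective h
    simpa using this
  · intro h
    simp [h]

/-- every point of a permutation whose cycle type is `replicate b n` has minimal period `n`. -/
lemma minimalPeriod_of_cycleType_replicate {b n : ℕ} (σ : Perm (Fin (b * n)))
    (hσ : σ.cycleType = Multiset.replicate b n) (j : Fin (b * n)) :
    Function.minimalPeriod ⇑σ j = n := by
  have hsum := Equiv.Perm.sum_cycleType σ
  rw [hσ, Multiset.sum_replicate, smul_eq_mul] at hsum
  have hsup : σ.support = Finset.univ := by
    apply Finset.eq_univ_of_card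
    rw [Fintype.card_fin]; omega
  have hj : j ∈ σ.support := hsup ▸ Finset.mem_univ j
  have hne : σ j ≠ j := Equiv.Perm.mem_support.mp hj
  have hc : σ.cycleOf j ∈ σ.cycleFactorsFinset :=
    Equiv.Perm.cycleOf_mem_cycleFactorsFinset_iff.mpr hj
  have hcard : (σ.cycleOf j).support.card = n := by
    have hmem : (σ.cycleOf j).support.card ∈ σ.cycleType := by
      rw [Equiv.Perm.cycleType_def]
      exact Multiset.mem_map_of_mem _ hc
    rw [hσ] at hmem
    exact Multiset.eq_of_mem_replicate hmem
  have hcyc := Equiv.Perm.isCycle_cycleOf σ hne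
  have horder : orderOf (σ.cycleOf j) = n := by rw [hcyc.orderOf, hcard]
  have hn0 : 0 < n := by
    rw [← hcard]
    exact lt_of_lt_of_le zero_lt_two hcyc.two_le_card_support
  have hper : Function.IsPeriodicPt ⇑σ n j := by
    show σ^[n] j = j
    rw [Equiv.Perm.iterate_eq_pow]
    have h1 := Equiv.Perm.pow_mod_card_support_cycleOf_self_apply σ n j
    rw [hcard, Nat.mod_self, pow_zero] at h1
    exact h1.symm
  refine le_antisymm (hper.minimalPeriod_le hn0) ?_
  by_contra hlt
  push_neg at hlt
  have hposk : 0 < Function.minimalPeriod ⇑σ j := hper.minimalPeriod_pos hn0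
  have hk : (σ ^ Function.minimalPeriod ⇑σ j) j = j := by
    rw [← Equiv.Perm.iterate_eq_pow]
    exact Function.iterate_minimalPeriod
  have hone : (σ.cycleOf j) ^ Function.minimalPeriod ⇑σ j = 1 :=
    hcyc.pow_eq_one_iff.mpr ⟨j, by rwa [Equiv.Perm.cycleOf_apply_self],
      by rwa [Equiv.Perm.cycleOf_pow_apply_self]⟩
  have hdvd := orderOf_dvd_of_pow_eq_one hone
  rw [horder] at hdvd
  exact absurd (Nat.le_of_dvd hposk hdvd) (not_le.mpr hlt)

lemma minimalPeriod_le_card {m : ℕ} (f : Perm (Fin m)) (j : Fin m) :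
    Function.minimalPeriod ⇑f j ≤ m := by
  by_cases h : f j = j
  · rw [Function.minimalPeriod_eq_one_iff_isFixedPt.mpr h]
    exact j.pos
  · have hpos : 0 < (f.cycleOf j).support.card := by
      rw [Finset.card_pos, Equiv.Perm.support_cycleOf_nonempty]
      exact h
    have hper : Function.IsPeriodicPt ⇑f ((f.cycleOf j).support.card) j := by
      show f^[_] j = j
      rw [Equiv.Perm.iterate_eq_pow]
      have h1 := Equiv.Perm.pow_mod_card_support_cycleOf_self_apply f
        ((f.cycleOf j).support.card) j
      rw [Nat.mod_self, pow_zero] at h1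
      exact h1.symm
    refine le_trans (hper.minimalPeriod_le hpos) ?_
    exact le_trans (Finset.card_le_univ _) (by simp)

/-- A permutation of a sum type which maps `inr` into `inr` is a `sumCongr`. -/
lemma exists_sumCongr_of_maps_inr {α β : Type*} [Finite α] [Finite β] (u : Perm (α ⊕ β))
    (h2 : ∀ j : β, ∃ j', u (Sum.inr j) = Sum.inr j') :
    ∃ pq : Perm α × Perm β, Equiv.sumCongr pq.1 pq.2 = u := by
  classical
  have h1 : ∀ i : α, ∃ i', u (Sum.inl i) = Sum.inl i' := by
    intro i
    rcases hs : u (Sum.inl i) with i' | j'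
    · exact ⟨i', rfl⟩
    · exfalso
      have hinj : Function.Injective (fun j => (h2 j).choose) := by
        intro a c hac
        have hac' : u (Sum.inr a) = u (Sum.inr c) := by
          rw [(h2 a).choose_spec, (h2 c).choose_spec]
          simpa using hac
        simpa using u.injective hac'
      obtain ⟨j, hj⟩ := (Finite.injective_iff_surjective.mp hinj) j'
      have huj : u (Sum.inr j) = Sum.inr j' := by
        rw [(h2 j).choose_spec]; exact congrArg (Sum.inr : β → α ⊕ β) hj
      have := u.injective (hs.trans huj.symm)
      simp at this
  have hpinj : Function.Injective (fun i => (h1 i).choose) := by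
    intro a c hac
    have hac' : u (Sum.inl a) = u (Sum.inl c) := by
      rw [(h1 a).choose_spec, (h1 c).choose_spec]
      simpa using hac
    simpa using u.injective hac'
  have hqinj : Function.Injective (fun j => (h2 j).choose) := by
    intro a c hac
    have hac' : u (Sum.inr a) = u (Sum.inr c) := by
      rw [(h2 a).choose_spec, (h2 c).choose_spec]
      simpa using hac
    simpa using u.injective hac'
  refine ⟨(Equiv.ofBijective _ (Finite.injective_iff_bijective.mp hpinj),
           Equiv.ofBijective _ (Finite.injective_iff_bijective.mp hqinj)), ?_⟩
  ext s
  cases s with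
  | inl i => simpa [Equiv.sumCongr_apply, Equiv.ofBijective_apply] using ((h1 i).choose_spec).symm
  | inr j => simpa [Equiv.sumCongr_apply, Equiv.ofBijective_apply] using ((h2 j).choose_spec).symm

/-- the key lemma: if a conjugate of `youngEmb (σ, g)` lands in the Young subgroup, then the
conjugating element is itself in the Young subgroup. -/
lemma mem_range_young {b n m : ℕ} (hnm : m < n) (σ : Perm (Fin (b * n)))
    (hσ : σ.cycleType = Multiset.replicate b n) (g : Perm (Fin m))
    (x : Perm (Fin (b * n + m))) (p : Perm (Fin (b * n))) (q : Perm (Fin m))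
    (hx : youngEmb (b * n) m (p, q) = x⁻¹ * youngEmb (b * n) m (σ, g) * x) :
    ∃ yz, youngEmb (b * n) m yz = x := by
  have h2 : ∀ j : Fin m, ∃ j',
      (finSumFinEquiv.symm.permCongr x) (Sum.inr j) = Sum.inr j' := by
    intro j
    rcases hs : finSumFinEquiv.symm (x (finSumFinEquiv (Sum.inr j))) with i | j'
    · exfalso
      have hxa : x (finSumFinEquiv (Sum.inr j)) = finSumFinEquiv (Sum.inl i) := by
        rw [← hs, Equiv.apply_symm_apply]
      have hcj := minimalPeriod_conj (youngEmb (b * n) m (σ, g)) x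
        (finSumFinEquiv (Sum.inr j))
      rw [← hx, minimalPeriod_young_inr, hxa, minimalPeriod_young_inl,
        minimalPeriod_of_cycleType_replicate σ hσ i] at hcj
      have hle := minimalPeriod_le_card q j
      rw [hcj] at hle
      omega
    · exact ⟨j', by rw [Equiv.permCongr_apply, Equiv.symm_symm]; exact hs⟩
  obtain ⟨pq, hpq⟩ := exists_sumCongr_of_maps_inr _ h2
  refine ⟨pq, ?_⟩
  have hdef : youngEmb (b * n) m pq = finSumFinEquiv.permCongr (Equiv.sumCongr pq.1 pq.2) := rfl
  rw [hdef, hpq]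
  ext a
  simp [Equiv.permCongr_apply]

lemma ite_and_mul_zero {A B : Prop} {dA : Decidable A} {dB : Decidable B}
    {dAB : Decidable (A ∧ B)} (a c : ℂ) :
    (@ite ℂ (A ∧ B) dAB (a * c) 0) = (@ite ℂ A dA a 0) * (@ite ℂ B dB c 0) := by
  split_ifs with h h1 h2 <;> simp_all

theorem stmt2 (b n m : ℕ) (hnm : m < n)
    (P : Subgroup (Perm (Fin (b * n)))) (Q : Subgroup (Perm (Fin m)))
    (σ : Perm (Fin (b * n))) (hσP : σ ∈ P)
    (hσ : σ.cycleType = Multiset.replicate b n)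
    (g : Perm (Fin m)) (hg : g ∈ Q)
    (χ : ↥P → ℂ) (η : ↥Q → ℂ)
    (hχ : ∀ x y : ↥P, χ (y * x * y⁻¹) = χ x)
    (hη : ∀ x y : ↥Q, η (y * x * y⁻¹) = η x) :
    indVia ((youngEmb (b * n) m).comp (P.subtype.prodMap Q.subtype))
        (fun x => χ x.1 * η x.2) (youngEmb (b * n) m (σ, g)) =
      indVia P.subtype χ σ * indVia Q.subtype η g := by
  classical
  unfold indVia
  beta_reduce
  set Y := youngEmb (b * n) m with hY
  have Yinj : Function.Injective ⇑Y := youngEmb_injective (b * n) m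
  have hcomp : ∀ h : ↥P × ↥Q,
      (Y.comp (P.subtype.prodMap Q.subtype)) h = Y (P.subtype h.1, Q.subtype h.2) :=
    fun h => rfl
  set F : Perm (Fin (b * n)) → ℂ :=
    fun y => ∑ p : ↥P,
      @ite ℂ (P.subtype p = y⁻¹ * σ * y) (Classical.propDecidable _) (χ p) 0 with hF
  set G : Perm (Fin m) → ℂ :=
    fun z => ∑ q : ↥Q,
      @ite ℂ (Q.subtype q = z⁻¹ * g * z) (Classical.propDecidable _) (η q) 0 with hG
  set S : Perm (Fin (b * n + m)) → ℂ :=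
    fun x => ∑ h : ↥P × ↥Q,
      @ite ℂ ((Y.comp (P.subtype.prodMap Q.subtype)) h = x⁻¹ * Y (σ, g) * x)
        (Classical.propDecidable _) (χ h.1 * η h.2) 0 with hS
  have hSzero : ∀ x ∉ Finset.univ.image ⇑Y, S x = 0 := by
    intro x hx
    apply Finset.sum_eq_zero
    intro h _
    rw [if_neg]
    intro heq
    rw [hcomp h] at heq
    obtain ⟨yz, hyz⟩ := mem_range_young hnm σ hσ g x _ _ heq
    exact hx (Finset.mem_image.mpr ⟨yz, Finset.mem_univ _, hyz⟩)
  have hstepB : ∑ x : Perm (Fin (b * n + m)), S x = ∑ yz : Perm (Fin (b * n)) × Perm (Fin m),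
      S (Y yz) := by
    have himg : ∑ x ∈ Finset.univ.image ⇑Y, S x =
        ∑ yz : Perm (Fin (b * n)) × Perm (Fin m), S (Y yz) :=
      Finset.sum_image (fun a _ c _ hac => Yinj hac)
    rw [← himg]
    exact (Finset.sum_subset (Finset.subset_univ _) (fun x _ hx => hSzero x hx)).symm
  have hstepC : ∀ yz : Perm (Fin (b * n)) × Perm (Fin m), S (Y yz) = F yz.1 * G yz.2 := by
    rintro ⟨y, z⟩
    have hprod : ((y, z) : Perm (Fin (b * n)) × Perm (Fin m))⁻¹ * (σ, g) * (y, z) =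
        (y⁻¹ * σ * y, z⁻¹ * g * z) := rfl
    have hconj : (Y (y, z))⁻¹ * Y (σ, g) * Y (y, z) = Y (y⁻¹ * σ * y, z⁻¹ * g * z) := by
      rw [← map_inv, ← map_mul, ← map_mul, hprod]
    have hcond : ∀ h : ↥P × ↥Q,
        ((Y.comp (P.subtype.prodMap Q.subtype)) h = (Y (y, z))⁻¹ * Y (σ, g) * Y (y, z)) ↔
        (P.subtype h.1 = y⁻¹ * σ * y ∧ Q.subtype h.2 = z⁻¹ * g * z) := by
      intro h
      rw [hcomp h, hconj]
      constructor
      · intro heq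
        have := Yinj heq
        exact ⟨congrArg Prod.fst this, congrArg Prod.snd this⟩
      · rintro ⟨h1, h2⟩
        rw [h1, h2]
    calc S (Y (y, z)) = ∑ h : ↥P × ↥Q,
          (@ite ℂ (P.subtype h.1 = y⁻¹ * σ * y) (Classical.propDecidable _) (χ h.1) 0) *
          (@ite ℂ (Q.subtype h.2 = z⁻¹ * g * z) (Classical.propDecidable _) (η h.2) 0) := by
            apply Finset.sum_congr rfl
            intro h _
            simp only [hS, hcond h]
            exact ite_and_mul_zero _ _
      _ = (∑ p : ↥P,
            @ite ℂ (P.subtype p = y⁻¹ * σ * y) (Classical.propDecidable _) (χ p) 0) *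
          (∑ q : ↥Q,
            @ite ℂ (Q.subtype q = z⁻¹ * g * z) (Classical.propDecidable _) (η q) 0) := by
            rw [Fintype.sum_prod_type, Finset.sum_mul_sum]
      _ = F y * G z := rfl
  have hfinal : ∑ yz : Perm (Fin (b * n)) × Perm (Fin m), S (Y yz) =
      (∑ y : Perm (Fin (b * n)), F y) * (∑ z : Perm (Fin m), G z) := by
    rw [Fintype.sum_prod_type, Finset.sum_mul_sum]
    exact Finset.sum_congr rfl fun y _ => Finset.sum_congr rfl fun z _ => hstepC (y, z)
  rw [hstepB, hfinal, Nat.card_prod, Nat.cast_mul, mul_inv]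
  ring
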